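/- arXiv:2406.04078 — 3 statements merged into one kernel-verified Lean document; each statement's English description precedes it below -/
import Mathlib

section
/- Suppose u₁, u₂, u₃, u₄ are nonzero vectors of ℝ³. Then there are no sets A₁, A₂, A₃, A₄ covering ℝ³ such that H_{u_i}(p) ∩ A_i is finite for all p ∈ ℝ³ and all 1 ≤ i ≤ 4. -/
/-- `Hplane u p` is the hyperplane through `p` orthogonal to `u`. -/
def Hplane {d : ℕ} (u p : EuclideanSpace ℝ (Fin d)) : Set (EuclideanSpace ℝ (Fin d)) :=
  {x | (inner ℝ (x - p) u : ℝ) = 0}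

/-- Counting lemma: a "grid" cannot be covered by a set with finite rows
and a set with finite columns. -/
lemma two_dir_aux {E : Type*} (f : ℝ → ℝ → E) (B C : Set E)
    (hB : ∀ t, {s | f s t ∈ B}.Finite)
    (hC : ∀ s, {t | f s t ∈ C}.Finite)
    (hcov : ∀ s t, f s t ∈ B ∨ f s t ∈ C) : False := by
  have hS : (⋃ n : ℕ, {s | f s (n : ℝ) ∈ B}).Countable :=
    Set.countable_iUnion fun n => (hB n).countable
  obtain ⟨s₀, hs₀⟩ : ∃ s₀, s₀ ∉ ⋃ n : ℕ, {s | f s (n : ℝ) ∈ B} := by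
    by_contra h
    push_neg at h
    have : (⋃ n : ℕ, {s | f s (n : ℝ) ∈ B}) = Set.univ :=
      Set.eq_univ_iff_forall.mpr h
    exact Cardinal.not_countable_real (this ▸ hS)
  have hsub : Set.range (fun n : ℕ => (n : ℝ)) ⊆ {t | f s₀ t ∈ C} := by
    rintro _ ⟨n, rfl⟩
    rcases hcov s₀ n with h | h
    · exact absurd (Set.mem_iUnion.mpr ⟨n, h⟩) hs₀
    · exact h
  exact (Set.infinite_range_of_injective (fun a b => by exact_mod_cast id))
    ((hC s₀).subset hsub)

/-- In `ℝ³` there is a nonzero vector orthogonal to any two given vectors. -/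
lemma perp_pair (a b : EuclideanSpace ℝ (Fin 3)) (ha : a ≠ 0) (hb : b ≠ 0) :
    ∃ v : EuclideanSpace ℝ (Fin 3), v ≠ 0 ∧ (inner ℝ v a : ℝ) = 0 ∧ (inner ℝ v b : ℝ) = 0 := by
  set K : Submodule ℝ (EuclideanSpace ℝ (Fin 3)) := (ℝ ∙ a) ⊔ (ℝ ∙ b) with hK
  have h1 : Module.finrank ℝ K ≤ 2 := by
    have := Submodule.finrank_sup_add_finrank_inf_eq (ℝ ∙ a) (ℝ ∙ b)
    have ha1 : Module.finrank ℝ (ℝ ∙ a) = 1 := finrank_span_singleton ha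
    have hb1 : Module.finrank ℝ (ℝ ∙ b) = 1 := finrank_span_singleton hb
    rw [← hK, ha1, hb1] at this
    omega
  have h2 : Module.finrank ℝ K + Module.finrank ℝ Kᗮ = 3 := by
    simpa using Submodule.finrank_add_finrank_orthogonal K
  have h3 : Kᗮ ≠ ⊥ := by
    intro h
    rw [h] at h2
    simp [finrank_bot] at h2
    omega
  obtain ⟨v, hvK, hv0⟩ := Submodule.exists_mem_ne_zero_of_ne_bot h3
  refine ⟨v, hv0, ?_, ?_⟩
  · rw [real_inner_comm]
    exact (Submodule.mem_orthogonal K v).mp hvK a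
      (Submodule.mem_sup_left (Submodule.mem_span_singleton_self a))
  · rw [real_inner_comm]
    exact (Submodule.mem_orthogonal K v).mp hvK b
      (Submodule.mem_sup_right (Submodule.mem_span_singleton_self b))

theorem stmt15 (u : Fin 4 → EuclideanSpace ℝ (Fin 3)) (hu : ∀ i, u i ≠ 0)
    (A : Fin 4 → Set (EuclideanSpace ℝ (Fin 3)))
    (hA : ∀ (p : EuclideanSpace ℝ (Fin 3)) (i : Fin 4), (Hplane (u i) p ∩ A i).Finite) :
    (⋃ i, A i) ≠ Set.univ := by
  intro hcover
  obtain ⟨v, hv0, hv1, hv2⟩ := perp_pair (u 0) (u 1) (hu 0) (hu 1)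
  obtain ⟨w, hw0, hw1, hw2⟩ := perp_pair (u 2) (u 3) (hu 2) (hu 3)
  apply two_dir_aux (fun s t => s • v + t • w) (A 0 ∪ A 1) (A 2 ∪ A 3)
  · -- rows: finite intersection with A 0 ∪ A 1
    intro t
    have hinj : Function.Injective (fun s : ℝ => s • v + t • w) := by
      intro s₁ s₂ h
      simp only [add_left_inj] at h
      exact smul_left_injective ℝ hv0 h
    have hmem : ∀ (i : Fin 4), (inner ℝ v (u i) : ℝ) = 0 →
        ∀ s : ℝ, s • v + t • w ∈ A i → s • v + t • w ∈ Hplane (u i) (t • w) ∩ A i := by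
      intro i hvi s hs
      refine ⟨?_, hs⟩
      show (inner ℝ (s • v + t • w - t • w) (u i) : ℝ) = 0
      rw [add_sub_cancel_right, inner_smul_left, hvi]
      simp
    have hsub : {s : ℝ | s • v + t • w ∈ A 0 ∪ A 1} ⊆
        ((fun s : ℝ => s • v + t • w) ⁻¹' (Hplane (u 0) (t • w) ∩ A 0)) ∪
        ((fun s : ℝ => s • v + t • w) ⁻¹' (Hplane (u 1) (t • w) ∩ A 1)) := by
      rintro s (hs | hs)
      · exact Or.inl (hmem 0 hv1 s hs)
      · exact Or.inr (hmem 1 hv2 s hs)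
    exact Set.Finite.subset
      (((hA (t • w) 0).preimage hinj.injOn).union ((hA (t • w) 1).preimage hinj.injOn)) hsub
  · -- columns: finite intersection with A 2 ∪ A 3
    intro s
    have hinj : Function.Injective (fun t : ℝ => s • v + t • w) := by
      intro t₁ t₂ h
      simp only [add_right_inj] at h
      exact smul_left_injective ℝ hw0 h
    have hmem : ∀ (i : Fin 4), (inner ℝ w (u i) : ℝ) = 0 →
        ∀ t : ℝ, s • v + t • w ∈ A i → s • v + t • w ∈ Hplane (u i) (s • v) ∩ A i := by
      intro i hwi t hs
      refine ⟨?_, hs⟩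
      show (inner ℝ (s • v + t • w - s • v) (u i) : ℝ) = 0
      rw [add_sub_cancel_left, inner_smul_left, hwi]
      simp
    have hsub : {t : ℝ | s • v + t • w ∈ A 2 ∪ A 3} ⊆
        ((fun t : ℝ => s • v + t • w) ⁻¹' (Hplane (u 2) (s • v) ∩ A 2)) ∪
        ((fun t : ℝ => s • v + t • w) ⁻¹' (Hplane (u 3) (s • v) ∩ A 3)) := by
      rintro t (hs' | hs')
      · exact Or.inl (hmem 2 hw1 t hs')
      · exact Or.inr (hmem 3 hw2 t hs')
    exact Set.Finite.subset
      (((hA (s • v) 2).preimage hinj.injOn).union ((hA (s • v) 3).preimage hinj.injOn)) hsub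
  · -- covering
    intro s t
    have : s • v + t • w ∈ ⋃ i, A i := hcover ▸ Set.mem_univ _
    obtain ⟨i, hi⟩ := Set.mem_iUnion.mp this
    fin_cases i
    · exact Or.inl (Or.inl hi)
    · exact Or.inl (Or.inr hi)
    · exact Or.inr (Or.inl hi)
    · exact Or.inr (Or.inr hi)
end

section
/- For all d ≥ 3, CH (i.e., 2^ℵ₀ ≤ ℵ₁) is equivalent to the existence of sets A₁, …, A_d covering ℝ^d such that for every x ∈ ℝ and every 1 ≤ i ≤ d, the set H_i(x) ∩ A_i is countable, where H_i(x) = {(p₁, …, p_d) ∈ ℝ^d : p_i = x}. -/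
open Cardinal

theorem stmt16_aux : (continuum.{u} ≤ aleph.{u} 1) ↔ (continuum.{0} ≤ aleph.{0} 1) := by
  rw [show aleph.{u} 1 = Cardinal.lift.{u} (aleph.{0} 1) by
        rw [Cardinal.lift_aleph, Ordinal.lift_one],
      show continuum.{u} = Cardinal.lift.{u} continuum.{0} from Cardinal.lift_continuum.symm,
      Cardinal.lift_le]

theorem stmt16 (d : ℕ) (hd : 3 ≤ d) :
    continuum ≤ aleph 1 ↔
      ∃ A : Fin d → Set (EuclideanSpace ℝ (Fin d)),
        (⋃ i, A i) = Set.univ ∧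
        ∀ (x : ℝ) (i : Fin d),
          ({p : EuclideanSpace ℝ (Fin d) | p i = x} ∩ A i).Countable := by
  have hdpos : 0 < d := by omega
  rw [stmt16_aux]
  constructor
  · -- CH → decomposition
    intro hCH
    have hle : #ℝ ≤ #((aleph 1 : Cardinal.{0}).ord.ToType) := by
      rw [Cardinal.mk_real, Cardinal.mk_toType, Cardinal.card_ord]
      exact hCH
    obtain ⟨f⟩ := (Cardinal.le_def _ _).mp hle
    have hIic : ∀ x : ℝ, ({y : ℝ | f y ≤ f x}).Countable := by
      intro x
      have hIio : (Set.Iio (f x)).Countable := by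
        rw [Cardinal.countable_iff_lt_aleph_one]
        exact Cardinal.mk_Iio_ord_toType (f x)
      have hIic' : (Set.Iic (f x)).Countable := by
        rw [← Set.Iio_insert]
        exact hIio.insert _
      exact (hIic'.preimage f.injective).mono (fun y hy => hy)
    refine ⟨fun i => {p | ∀ j, f (p j) ≤ f (p i)}, ?_, ?_⟩
    · ext p
      simp only [Set.mem_iUnion, Set.mem_setOf_eq, Set.mem_univ, iff_true]
      obtain ⟨i, _, hi⟩ := Finset.exists_max_image Finset.univ (fun j => f (p j))
        ⟨⟨0, hdpos⟩, Finset.mem_univ _⟩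
      exact ⟨i, fun j => hi j (Finset.mem_univ _)⟩
    · intro x i
      set S : Set ℝ := {y : ℝ | f y ≤ f x} with hS
      have hScnt : S.Countable := hIic x
      haveI : Countable S := hScnt.to_subtype
      set T := {p : EuclideanSpace ℝ (Fin d) | p i = x} ∩ {p | ∀ j, f (p j) ≤ f (p i)}
        with hT
      have hmem : ∀ p ∈ T, ∀ j, p j ∈ S := by
        rintro p ⟨hp1, hp2⟩ j
        show f (p j) ≤ f x
        rw [← hp1]
        exact hp2 j
      set F : T → (Fin d → S) := fun p j => ⟨(p : EuclideanSpace ℝ (Fin d)) j,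
        hmem p p.2 j⟩ with hF
      have hFinj : Function.Injective F := by
        intro p q hpq
        ext j
        have := congrFun hpq j
        exact Subtype.ext_iff.mp this
      haveI : Countable T := hFinj.countable
      exact Set.countable_coe_iff.mp this
  · -- decomposition → CH
    rintro ⟨A, hcov, hcnt⟩
    by_contra hCH
    push_neg at hCH
    have hlt : (aleph 1 : Cardinal.{0}) < #ℝ := by rwa [Cardinal.mk_real]
    obtain ⟨Y, hY⟩ := Cardinal.le_mk_iff_exists_set.mp hlt.le
    set k : Fin d := ⟨0, hdpos⟩ with hk
    set B : Set (EuclideanSpace ℝ (Fin d)) :=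
      ⋃ z : Fin d × Y, ({p : EuclideanSpace ℝ (Fin d) | p z.1 = (z.2 : ℝ)} ∩ A z.1)
      with hB
    have hBcard : #B ≤ aleph 1 := by
      calc #B ≤ #(Fin d × Y) * ⨆ z : Fin d × Y,
            #(({p : EuclideanSpace ℝ (Fin d) | p z.1 = (z.2 : ℝ)} ∩ A z.1 : Set (EuclideanSpace ℝ (Fin d)))) :=
              Cardinal.mk_iUnion_le _
        _ ≤ aleph 1 * (Cardinal.aleph0 : Cardinal.{0}) := by
            apply mul_le_mul'
            · rw [Cardinal.mk_prod]
              calc Cardinal.lift.{0} #(Fin d) * Cardinal.lift.{0} #Y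
                  ≤ aleph 1 * aleph 1 := by
                    apply mul_le_mul'
                    · simp only [Cardinal.mk_fin, Cardinal.lift_natCast]
                      exact le_of_lt (lt_of_lt_of_le (Cardinal.nat_lt_aleph0 d)
                        (Cardinal.aleph0_le_aleph 1))
                    · rw [Cardinal.lift_id, hY]
                _ = aleph 1 := Cardinal.mul_eq_self (Cardinal.aleph0_le_aleph 1)
            · exact ciSup_le' fun z => (hcnt (z.2 : ℝ) z.1).le_aleph0
        _ = aleph 1 := by
            rw [Cardinal.mul_eq_max (Cardinal.aleph0_le_aleph 1) le_rfl]
            exact max_eq_left (Cardinal.aleph0_le_aleph 1)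
    set Tk : Set ℝ := (fun p : EuclideanSpace ℝ (Fin d) => p k) '' B with hTk
    have hTkcard : #Tk < #ℝ := lt_of_le_of_lt (le_trans (Cardinal.mk_image_le) hBcard) hlt
    have hTkne : Tk ≠ Set.univ := by
      intro h
      rw [h, Cardinal.mk_univ] at hTkcard
      exact lt_irrefl _ hTkcard
    obtain ⟨t, ht⟩ := Set.ne_univ_iff_exists_notMem _ |>.mp hTkne
    set g : Y → EuclideanSpace ℝ (Fin d) := fun y => WithLp.toLp 2 (fun j => if j = k then t else (y : ℝ))
      with hg
    have hgA : ∀ y : Y, g y ∈ {p : EuclideanSpace ℝ (Fin d) | p k = t} ∩ A k := by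
      intro y
      have hmem : g y ∈ ⋃ i, A i := by rw [hcov]; trivial
      obtain ⟨i, hi⟩ := Set.mem_iUnion.mp hmem
      have hgk : g y k = t := by simp [hg]
      by_cases hik : i = k
      · exact ⟨hgk, hik ▸ hi⟩
      · exfalso
        apply ht
        refine ⟨g y, ?_, hgk⟩
        refine Set.mem_iUnion.mpr ⟨(i, y), ?_, hi⟩
        show g y i = (y : ℝ)
        simp [hg, hik]
    have hj1 : (⟨1, by omega⟩ : Fin d) ≠ k := by
      simp [hk, Fin.ext_iff]
    have hginj : Function.Injective g := by
      intro y₁ y₂ h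
      have := congrFun (congrArg WithLp.ofLp h) (⟨1, by omega⟩ : Fin d)
      simp only [hg, WithLp.ofLp_toLp, if_neg hj1] at this
      exact Subtype.ext this
    have hcount := hcnt t k
    have : aleph 1 ≤ (Cardinal.aleph0 : Cardinal.{0}) := by
      calc aleph 1 = #Y := hY.symm
        _ ≤ #({p : EuclideanSpace ℝ (Fin d) | p k = t} ∩ A k : Set _) := by
            exact Cardinal.mk_le_mk_of_subset (Set.range_subset_iff.mpr hgA) |>.trans'
              (Cardinal.mk_le_of_injective (f := fun y : Y =>
                (⟨g y, Set.mem_range_self y⟩ : Set.range g))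
                (fun a b hab => hginj (Subtype.ext_iff.mp hab)))
        _ ≤ (Cardinal.aleph0 : Cardinal.{0}) := hcount.le_aleph0
    exact absurd this (not_le.mpr Cardinal.aleph0_lt_aleph_one)
end

section
/- Let ε > 0 and let κ be a cardinal. For every set X ⊆ ℝ with ℵ₀ ≤ |X| < κ ≤ 2^ℵ₀, there is a set S ⊆ (−ε, ε) with |S| = κ and (X − X) ∩ (S − S) = {0}, where X − X = {x − y : x, y ∈ X} and S − S = {s − t : s, t ∈ S}. -/
open Cardinal Pointwise

theorem stmt18 (ε : ℝ) (hε : 0 < ε) (κ : Cardinal) (X : Set ℝ)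
    (h1 : ℵ₀ ≤ Cardinal.mk X) (h2 : Cardinal.mk X < κ) (h3 : κ ≤ continuum) :
    ∃ S : Set ℝ, S ⊆ Set.Ioo (-ε) ε ∧ Cardinal.mk S = κ ∧
      (X - X) ∩ (S - S) = {0} := by
  classical
  have hXinf : Infinite X := Cardinal.infinite_iff.mpr h1
  -- the subgroup generated (as ℤ-span) by X
  set M : Submodule ℤ ℝ := Submodule.span ℤ X with hM
  set G : AddSubgroup ℝ := M.toAddSubgroup with hGdef
  have hXG : X ⊆ (G : Set ℝ) := Submodule.subset_span
  -- cardinality of G is at most #X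
  have hGcard : #G ≤ #X := by
    have hsurj : Function.Surjective
        (fun f : X →₀ ℤ => (⟨Finsupp.linearCombination ℤ (Subtype.val : X → ℝ) f,
          by
            have h0 : Finsupp.linearCombination ℤ (Subtype.val : X → ℝ) f ∈
                LinearMap.range (Finsupp.linearCombination ℤ (Subtype.val : X → ℝ)) :=
              ⟨f, rfl⟩
            rw [Finsupp.range_linearCombination, Subtype.range_coe] at h0
            exact h0⟩ : G)) := by
      rintro ⟨y, hy⟩
      have h0 : y ∈ Submodule.span ℤ (Set.range (Subtype.val : X → ℝ)) := by
        rwa [Subtype.range_coe]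
      rw [← Finsupp.range_linearCombination] at h0
      obtain ⟨f, hf⟩ := h0
      exact ⟨f, Subtype.ext hf⟩
    calc #G ≤ #(X →₀ ℤ) := Cardinal.mk_le_of_surjective hsurj
    _ = max #X #ℤ := Cardinal.mk_finsupp_of_infinite X ℤ
    _ = #X := by
        rw [max_eq_left]
        exact (Cardinal.mk_le_aleph0).trans h1
  have hGlt : #G < continuum := lt_of_le_of_lt hGcard (h2.trans_le h3)
  -- the quotient map
  set q : ℝ → ℝ ⧸ G := QuotientAddGroup.mk with hq
  set I : Set ℝ := Set.Ioo (-ε) ε with hI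
  have hIcard : #I = continuum := Cardinal.mk_Ioo_real (by linarith)
  -- choose representatives in I for each coset in q '' I
  have hrep : ∀ c : q '' I, ∃ x : ℝ, x ∈ I ∧ q x = c := by
    rintro ⟨c, x, hx, rfl⟩
    exact ⟨x, hx, rfl⟩
  choose r hrI hrq using hrep
  -- the image q '' I has continuum many elements
  have himg : continuum ≤ #(q '' I) := by
    by_contra hcon
    push_neg at hcon
    have hinj : Function.Injective (fun x : I =>
        ((⟨q x, ⟨x, x.2, rfl⟩⟩ : q '' I),
         (⟨(x : ℝ) - r ⟨q x, ⟨x, x.2, rfl⟩⟩, by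
            rw [← QuotientAddGroup.eq_iff_sub_mem]
            exact (hrq ⟨q x, ⟨x, x.2, rfl⟩⟩).symm⟩ : G))) := by
      rintro ⟨x, hx⟩ ⟨y, hy⟩ hxy
      simp only [Prod.mk.injEq, Subtype.mk.injEq] at hxy
      obtain ⟨hq1, hq2⟩ := hxy
      apply Subtype.ext
      have : r ⟨q x, ⟨x, hx, rfl⟩⟩ = r ⟨q y, ⟨y, hy, rfl⟩⟩ := by
        congr 1
      rw [this] at hq2
      linarith [sub_left_injective.eq_iff.mp hq2]
    have : #I ≤ #(q '' I) * #G := by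
      have := Cardinal.mk_le_of_injective hinj
      rwa [Cardinal.mk_prod, Cardinal.lift_id, Cardinal.lift_id] at this
    rw [hIcard] at this
    exact absurd this (not_le.mpr (Cardinal.mul_lt_of_lt
      Cardinal.aleph0_le_continuum hcon hGlt))
  -- choose a subset T of the image of cardinality κ
  obtain ⟨T, hTsub, hTcard⟩ := Cardinal.le_mk_iff_exists_subset.mp (h3.trans himg)
  -- define S as representatives of T
  set g : (ℝ ⧸ G) → ℝ := fun c => if h : c ∈ q '' I then r ⟨c, h⟩ else 0 with hg
  have hgI : ∀ c ∈ T, g c ∈ I := by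
    intro c hc
    rw [hg]; dsimp only
    rw [dif_pos (hTsub hc)]
    exact hrI _
  have hgq : ∀ c ∈ T, q (g c) = c := by
    intro c hc
    rw [hg]; dsimp only
    rw [dif_pos (hTsub hc)]
    exact hrq _
  have hginj : Set.InjOn g T := by
    intro c hc d hd hcd
    rw [← hgq c hc, ← hgq d hd, hcd]
  refine ⟨g '' T, ?_, ?_, ?_⟩
  · rintro s ⟨c, hc, rfl⟩
    exact hgI c hc
  · rw [Cardinal.mk_image_eq_of_injOn g T hginj, hTcard]
  · -- the intersection is {0}
    have hTne : T.Nonempty := by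
      rw [← Set.nonempty_coe_sort, ← Cardinal.mk_ne_zero_iff, hTcard]
      intro h0
      rw [h0] at h2
      exact absurd h2 (not_lt.mpr zero_le)
    have hXne : X.Nonempty := by
      rw [← Set.nonempty_coe_sort]
      exact (Cardinal.infinite_iff.mpr h1).nonempty
    apply Set.eq_singleton_iff_unique_mem.mpr
    constructor
    · constructor
      · obtain ⟨x, hx⟩ := hXne
        exact ⟨x, hx, x, hx, by ring⟩
      · obtain ⟨c, hc⟩ := hTne
        exact ⟨g c, ⟨c, hc, rfl⟩, g c, ⟨c, hc, rfl⟩, by ring⟩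
    · rintro d ⟨hdX, hdS⟩
      obtain ⟨x, hx, y, hy, hxy⟩ := hdX
      obtain ⟨s, ⟨c, hc, rfl⟩, t, ⟨c', hc', rfl⟩, hst⟩ := hdS
      dsimp only at hxy hst
      -- d ∈ G
      have hdG : d ∈ G := by
        rw [← hxy]
        exact sub_mem (hXG hx) (hXG hy)
      -- q d = c - c'
      have : q (g c) = q (g c') := by
        rw [← sub_eq_zero, ← QuotientAddGroup.mk_sub]
        have : g c - g c' ∈ G := by rw [hst]; exact hdG
        rwa [QuotientAddGroup.eq_zero_iff]
      rw [hgq c hc, hgq c' hc'] at this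
      rw [← hst, this, sub_self]
end
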